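/- For all positive integers m and n, tₙ(1_m) = ((-1)^{m-1}/m) · ∑_{i=0}^{m-1} (-1)^i tₙ(1_i) tₙ(m-i), where tₙ(1_i) is the multiple t-harmonic sum with i ones and tₙ(k) = ∑_{j=1}^n 1/(2j-1)^k. -/

import Mathlib

open Finset

/-- Multiple t-harmonic sum with `k` ones: `tₙ(1_k) = ∑_{n ≥ n₁ > ⋯ > n_k ≥ 1} ∏ 1/(2n_j-1)`. -/
noncomputable def tharm : ℕ → ℕ → ℝ
  | 0, _ => 1
  | (k+1), n => ∑ j ∈ Finset.Icc 1 n, (1 / (2 * (j : ℝ) - 1)) * tharm k (j - 1)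

/-- `tₙ(k) = ∑_{j=1}^n 1/(2j-1)^k`. -/
noncomputable def tpow (k n : ℕ) : ℝ := ∑ j ∈ Finset.Icc 1 n, 1 / (2 * (j : ℝ) - 1) ^ k

noncomputable def tg (j : ℕ) : ℝ := 1 / (2 * (j : ℝ) - 1)

noncomputable def tE (k n : ℕ) : ℝ := ∑ A ∈ (Finset.Icc 1 n).powersetCard k, ∏ j ∈ A, tg j

lemma tE_succ (k n : ℕ) : tE (k+1) (n+1) = tE (k+1) n + tg (n+1) * tE k n := by
  have hx : (n+1) ∉ Finset.Icc 1 n := by simp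
  have hins : Finset.Icc 1 (n+1) = insert (n+1) (Finset.Icc 1 n) := by
    ext j; simp [Finset.mem_Icc]; omega
  rw [tE, hins, Finset.powersetCard_succ_insert hx, Finset.sum_union, Finset.sum_image]
  · congr 1
    rw [tE, Finset.mul_sum]
    refine Finset.sum_congr rfl fun A hA => ?_
    have hxA : (n+1) ∉ A := fun h => hx (Finset.mem_powersetCard.1 hA |>.1 h)
    rw [Finset.prod_insert hxA]
  · intro A hA B hB h
    have hxA : (n+1) ∉ A := fun hc => hx (Finset.mem_powersetCard.1 hA |>.1 hc)
    have hxB : (n+1) ∉ B := fun hc => hx (Finset.mem_powersetCard.1 hB |>.1 hc)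
    have := congrArg (Finset.erase · (n+1)) h
    simpa [Finset.erase_insert hxA, Finset.erase_insert hxB] using this
  · rw [Finset.disjoint_left]
    intro A hA hA'
    obtain ⟨B, hB, rfl⟩ := Finset.mem_image.1 hA'
    exact hx ((Finset.mem_powersetCard.1 hA).1 (Finset.mem_insert_self _ _))

lemma tharm_eq_tE : ∀ n k, tharm k n = tE k n := by
  intro n
  induction n with
  | zero =>
    intro k
    cases k with
    | zero => simp [tharm, tE]
    | succ k =>
      rw [show tharm (k+1) 0 = ∑ j ∈ Finset.Icc (1:ℕ) 0, (1 / (2 * (j : ℝ) - 1)) * tharm k (j - 1) from rfl]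
      rw [tE, Finset.powersetCard_eq_empty.2 (by simp)]
      simp
  | succ n ih =>
    intro k
    cases k with
    | zero => simp [tharm, tE]
    | succ k =>
      have hins : Finset.Icc 1 (n+1) = insert (n+1) (Finset.Icc 1 n) := by
        ext j; simp [Finset.mem_Icc]; omega
      have hx : (n+1) ∉ Finset.Icc 1 n := by simp
      rw [show tharm (k+1) (n+1) = ∑ j ∈ Finset.Icc 1 (n+1),
          (1 / (2 * (j : ℝ) - 1)) * tharm k (j - 1) from rfl,
        hins, Finset.sum_insert hx, tE_succ]
      have h1 : ∑ j ∈ Finset.Icc 1 n, (1 / (2 * (j : ℝ) - 1)) * tharm k (j - 1)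
          = tharm (k+1) n := rfl
      rw [h1, ih (k+1)]
      simp only [Nat.add_sub_cancel]
      rw [ih k]
      simp only [tg]
      push_cast
      ring

lemma tE_eq_eval (k n : ℕ) :
    tE k n = MvPolynomial.eval (fun j : {x // x ∈ Finset.Icc 1 n} => tg j.val)
      (MvPolynomial.esymm {x // x ∈ Finset.Icc 1 n} ℝ k) := by
  rw [MvPolynomial.esymm, map_sum]
  simp only [map_prod, MvPolynomial.eval_X]
  rw [← Finset.esymm_map_val (fun j : {x // x ∈ Finset.Icc 1 n} => tg j.val) _ k]
  rw [tE, ← Finset.esymm_map_val tg _ k]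
  congr 1
  rw [Finset.univ_eq_attach, Finset.attach_val]
  rw [show (Multiset.attach (Finset.Icc 1 n).val).map
      ((fun j : {x // x ∈ Finset.Icc 1 n} => tg j.val)) =
      ((Multiset.attach (Finset.Icc 1 n).val).map Subtype.val).map tg by
    rw [Multiset.map_map]; rfl]
  rw [Multiset.attach_map_val]

lemma tpow_eq_eval (k n : ℕ) :
    tpow k n = MvPolynomial.eval (fun j : {x // x ∈ Finset.Icc 1 n} => tg j.val)
      (MvPolynomial.psum {x // x ∈ Finset.Icc 1 n} ℝ k) := by
  rw [MvPolynomial.psum, map_sum]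
  simp only [map_pow, MvPolynomial.eval_X]
  rw [tpow, Finset.univ_eq_attach, ← Finset.sum_attach (Finset.Icc 1 n)
    (fun j => 1 / (2 * (j : ℝ) - 1) ^ k)]
  refine Finset.sum_congr rfl fun j _ => ?_
  rw [tg, div_pow, one_pow]

theorem tharm_recurrence (m n : ℕ) (hm : 1 ≤ m) (hn : 1 ≤ n) :
    tharm m n = (-1) ^ (m - 1) / (m : ℝ) *
      ∑ i ∈ Finset.range m, (-1) ^ i * tharm i n * tpow (m - i) n := by
  have key := congrArg (MvPolynomial.eval (fun j : {x // x ∈ Finset.Icc 1 n} => tg j.val))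
    (MvPolynomial.mul_esymm_eq_sum {x // x ∈ Finset.Icc 1 n} ℝ m)
  simp only [map_mul, map_sum, map_pow, map_neg, map_one, map_natCast] at key
  rw [← tE_eq_eval] at key
  have hsum : ∑ a ∈ (Finset.HasAntidiagonal.antidiagonal m).filter (fun a => a.1 < m),
      (-1 : ℝ) ^ a.1 * tE a.1 n * tpow a.2 n
      = ∑ i ∈ Finset.range m, (-1) ^ i * tharm i n * tpow (m - i) n := by
    refine Finset.sum_nbij' (fun a => a.1) (fun i => (i, m - i)) ?_ ?_ ?_ ?_ ?_
    · intro a ha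
      simp only [Finset.mem_filter, Finset.HasAntidiagonal.mem_antidiagonal] at ha
      simp [Finset.mem_range]; omega
    · intro i hi
      simp only [Finset.mem_range] at hi
      simp only [Finset.mem_filter, Finset.HasAntidiagonal.mem_antidiagonal]
      omega
    · intro a ha
      simp only [Finset.mem_filter, Finset.HasAntidiagonal.mem_antidiagonal] at ha
      ext <;> simp <;> omega
    · intro i hi; rfl
    · intro a ha
      simp only [Finset.mem_filter, Finset.HasAntidiagonal.mem_antidiagonal] at ha
      have ha2 : a.2 = m - a.1 := by omega
      rw [tharm_eq_tE, ha2]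
  rw [← hsum]
  have hkey : (m : ℝ) * tE m n = (-1) ^ (m + 1) *
      ∑ a ∈ (Finset.HasAntidiagonal.antidiagonal m).filter (fun a => a.1 < m),
        (-1 : ℝ) ^ a.1 * tE a.1 n * tpow a.2 n := by
    convert key using 2
    refine Finset.sum_congr rfl fun a ha => ?_
    rw [← tE_eq_eval, ← tpow_eq_eval]
  have hm' : (m : ℝ) ≠ 0 := Nat.cast_ne_zero.2 (by omega)
  have hpow : (-1 : ℝ) ^ (m + 1) = (-1) ^ (m - 1) := by
    rw [show m + 1 = (m - 1) + 2 by omega, pow_add]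
    ring
  rw [tharm_eq_tE, eq_comm, div_mul_eq_mul_div, eq_comm, eq_div_iff hm', mul_comm (tE m n)]
  rw [hkey, hpow]
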